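/- Let X : H0 -> H1 be a contractive solution of the Riccati equation such that the orthogonal projection Q onto G(H0,X) commutes with the orthogonal projection onto every closed B-invariant subspace of H. If Ker(I - X*X) ∩ Ker(V X - X* V*) = {0} (i.e., the kernel of I - X*X meets the kernel of the imaginary part of V X only in 0), then X is the unique contractive solution of the Riccati equation. -/

import Mathlib

set_option linter.unusedSectionVars false
set_option maxHeartbeats 1000000

noncomputable section
open ContinuousLinearMap
open scoped InnerProductSpace

namespace RiccatiAux

variable {H0 H1 : Type*}
  [NormedAddCommGroup H0] [InnerProductSpace ℂ H0] [CompleteSpace H0]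
  [NormedAddCommGroup H1] [InnerProductSpace ℂ H1] [CompleteSpace H1]

/-- embed a pair into the `L²` direct sum. -/
def mk2 (a : H0) (b : H1) : WithLp 2 (H0 × H1) := (WithLp.equiv 2 (H0 × H1)).symm (a, b)

@[simp] lemma mk2_fst (a : H0) (b : H1) : (mk2 a b).fst = a := rfl
@[simp] lemma mk2_snd (a : H0) (b : H1) : (mk2 a b).snd = b := rfl

lemma mk2_eta (u : WithLp 2 (H0 × H1)) : mk2 u.fst u.snd = u := rfl

lemma mk2_sub (a c : H0) (b d : H1) : mk2 a b - mk2 c d = mk2 (a - c) (b - d) := rfl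

lemma inner_mk2 (a c : H0) (b d : H1) :
    ⟪mk2 a b, mk2 c d⟫_ℂ = ⟪a, c⟫_ℂ + ⟪b, d⟫_ℂ := rfl

/-- graph of a continuous linear map, as a submodule of the `L²` direct sum -/
def gr (Z : H0 →L[ℂ] H1) : Submodule ℂ (WithLp 2 (H0 × H1)) :=
  LinearMap.ker (((ContinuousLinearMap.snd ℂ H0 H1 -
      Z.comp (ContinuousLinearMap.fst ℂ H0 H1)).comp
    (WithLp.prodContinuousLinearEquiv 2 ℂ H0 H1).toContinuousLinearMap :
      WithLp 2 (H0 × H1) →L[ℂ] H1) : WithLp 2 (H0 × H1) →ₗ[ℂ] H1)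

lemma mem_gr {Z : H0 →L[ℂ] H1} {u : WithLp 2 (H0 × H1)} :
    u ∈ gr Z ↔ u.snd = Z u.fst := by
  rw [gr, LinearMap.mem_ker]
  show u.snd - Z u.fst = 0 ↔ _
  exact sub_eq_zero

lemma gr_closed (Z : H0 →L[ℂ] H1) : IsClosed (gr Z : Set (WithLp 2 (H0 × H1))) :=
  ContinuousLinearMap.isClosed_ker _

instance (Z : H0 →L[ℂ] H1) : CompleteSpace (gr Z) := (gr_closed Z).completeSpace_coe

/-- orthogonal projection onto the graph -/
def pr (Z : H0 →L[ℂ] H1) : WithLp 2 (H0 × H1) →L[ℂ] WithLp 2 (H0 × H1) :=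
  (gr Z).subtypeL ∘L (gr Z).orthogonalProjectionOnto

lemma pr_mem (Z : H0 →L[ℂ] H1) (u : WithLp 2 (H0 × H1)) : pr Z u ∈ gr Z := by
  simp [pr]

lemma pr_eq_self {Z : H0 →L[ℂ] H1} {u : WithLp 2 (H0 × H1)} (hu : u ∈ gr Z) :
    pr Z u = u := by
  exact (Submodule.starProjection_eq_self_iff (K := gr Z)).mpr hu

lemma pr_idem (Z : H0 →L[ℂ] H1) : IsIdempotentElem (pr Z) := by
  ext u
  exact pr_eq_self (pr_mem Z u)

lemma pr_sa (Z : H0 →L[ℂ] H1) : IsSelfAdjoint (pr Z) :=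
  isSelfAdjoint_starProjection _

lemma pr_range (Z : H0 →L[ℂ] H1) : LinearMap.range (pr Z : WithLp 2 (H0 × H1) →ₗ[ℂ] WithLp 2 (H0 × H1)) = gr Z := by
  apply le_antisymm
  · rintro u ⟨v, rfl⟩; exact pr_mem Z v
  · intro u hu; exact ⟨u, pr_eq_self hu⟩

end RiccatiAux

open RiccatiAux

theorem unique_contractive_solution_of_trivial_kernel_imaginary_part
    {H0 H1 : Type*}
    [NormedAddCommGroup H0] [InnerProductSpace ℂ H0] [CompleteSpace H0]
    [TopologicalSpace.SeparableSpace H0]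
    [NormedAddCommGroup H1] [InnerProductSpace ℂ H1] [CompleteSpace H1]
    [TopologicalSpace.SeparableSpace H1]
    (A0 : H0 →L[ℂ] H0) (A1 : H1 →L[ℂ] H1) (V : H1 →L[ℂ] H0)
    (hA0 : IsSelfAdjoint A0) (hA1 : IsSelfAdjoint A1)
    (B : WithLp 2 (H0 × H1) →L[ℂ] WithLp 2 (H0 × H1))
    (hB : ∀ u : WithLp 2 (H0 × H1),
      WithLp.equiv 2 (H0 × H1) (B u) =
        (A0 (WithLp.equiv 2 (H0 × H1) u).1 + V (WithLp.equiv 2 (H0 × H1) u).2,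
         ContinuousLinearMap.adjoint V (WithLp.equiv 2 (H0 × H1) u).1
           + A1 (WithLp.equiv 2 (H0 × H1) u).2))
    (X : H0 →L[ℂ] H1) (hXnorm : ‖X‖ ≤ 1)
    (hX : A1.comp X - X.comp A0 - X.comp (V.comp X) + ContinuousLinearMap.adjoint V = 0)
    (Q : WithLp 2 (H0 × H1) →L[ℂ] WithLp 2 (H0 × H1))
    (hQ : IsIdempotentElem Q) (hQsa : IsSelfAdjoint Q)
    (hQran : LinearMap.range (Q : WithLp 2 (H0 × H1) →ₗ[ℂ] WithLp 2 (H0 × H1)) =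
      (LinearMap.graph X.toLinearMap).map (WithLp.linearEquiv 2 ℂ (H0 × H1)).symm.toLinearMap)
    (hQcomm : ∀ R : WithLp 2 (H0 × H1) →L[ℂ] WithLp 2 (H0 × H1),
      IsIdempotentElem R → IsSelfAdjoint R →
      (∀ u ∈ LinearMap.range (R : WithLp 2 (H0 × H1) →ₗ[ℂ] WithLp 2 (H0 × H1)), B u ∈ LinearMap.range (R : WithLp 2 (H0 × H1) →ₗ[ℂ] WithLp 2 (H0 × H1))) → Q * R = R * Q)
    (hker : LinearMap.ker ((ContinuousLinearMap.id ℂ H0 - (ContinuousLinearMap.adjoint X).comp X :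
          H0 →L[ℂ] H0) : H0 →ₗ[ℂ] H0) ⊓
        LinearMap.ker ((V.comp X -
          (ContinuousLinearMap.adjoint X).comp (ContinuousLinearMap.adjoint V) : H0 →L[ℂ] H0) :
            H0 →ₗ[ℂ] H0) = ⊥) :
    ∀ Y : H0 →L[ℂ] H1, ‖Y‖ ≤ 1 →
        A1.comp Y - Y.comp A0 - Y.comp (V.comp Y) + ContinuousLinearMap.adjoint V = 0 →
        Y = X := by
  intro Y hYnorm hY
  -- components of B
  have hB1 : ∀ u : WithLp 2 (H0 × H1), (B u).fst = A0 u.fst + V u.snd :=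
    fun u => congrArg Prod.fst (hB u)
  have hB2 : ∀ u : WithLp 2 (H0 × H1),
      (B u).snd = ContinuousLinearMap.adjoint V u.fst + A1 u.snd :=
    fun u => congrArg Prod.snd (hB u)
  -- pointwise Riccati equations
  have hXp : ∀ x : H0, ContinuousLinearMap.adjoint V x
      = X (A0 x) + X (V (X x)) - A1 (X x) := by
    intro x
    have h := ContinuousLinearMap.ext_iff.mp hX x
    simp only [ContinuousLinearMap.add_apply, ContinuousLinearMap.sub_apply,
      ContinuousLinearMap.comp_apply, ContinuousLinearMap.zero_apply] at h
    have h2 := eq_neg_of_add_eq_zero_right h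
    rw [h2]; abel
  have hYp : ∀ x : H0, ContinuousLinearMap.adjoint V x
      = Y (A0 x) + Y (V (Y x)) - A1 (Y x) := by
    intro x
    have h := ContinuousLinearMap.ext_iff.mp hY x
    simp only [ContinuousLinearMap.add_apply, ContinuousLinearMap.sub_apply,
      ContinuousLinearMap.comp_apply, ContinuousLinearMap.zero_apply] at h
    have h2 := eq_neg_of_add_eq_zero_right h
    rw [h2]; abel
  -- adjoint Riccati equation for X, pointwise
  have hXadjp : ∀ z : H1, V z =
      A0 (ContinuousLinearMap.adjoint X z)
      + ContinuousLinearMap.adjoint X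
          (ContinuousLinearMap.adjoint V (ContinuousLinearMap.adjoint X z))
      - ContinuousLinearMap.adjoint X (A1 z) := by
    have h := congrArg (fun T : H0 →L[ℂ] H1 => ContinuousLinearMap.adjoint T) hX
    simp only [map_add, map_sub, ContinuousLinearMap.adjoint_comp,
      ContinuousLinearMap.adjoint_adjoint, map_zero, hA0.adjoint_eq, hA1.adjoint_eq] at h
    intro z
    have h2 := ContinuousLinearMap.ext_iff.mp h z
    simp only [ContinuousLinearMap.add_apply, ContinuousLinearMap.sub_apply,
      ContinuousLinearMap.comp_apply, ContinuousLinearMap.zero_apply] at h2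
    have h3 := eq_neg_of_add_eq_zero_right h2
    rw [h3]; abel
  -- B is symmetric
  have hBsa : ∀ u v : WithLp 2 (H0 × H1), ⟪B u, v⟫_ℂ = ⟪u, B v⟫_ℂ := by
    intro u v
    rw [WithLp.prod_inner_apply, WithLp.prod_inner_apply]
    simp only [WithLp.ofLp_fst, WithLp.ofLp_snd]
    rw [hB1, hB2, hB1, hB2]
    have e1 : ⟪A0 u.fst, v.fst⟫_ℂ = ⟪u.fst, A0 v.fst⟫_ℂ := hA0.isSymmetric u.fst v.fst
    have e2 : ⟪V u.snd, v.fst⟫_ℂ = ⟪u.snd, ContinuousLinearMap.adjoint V v.fst⟫_ℂ :=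
      (ContinuousLinearMap.adjoint_inner_right V u.snd v.fst).symm
    have e3 : ⟪ContinuousLinearMap.adjoint V u.fst, v.snd⟫_ℂ = ⟪u.fst, V v.snd⟫_ℂ :=
      ContinuousLinearMap.adjoint_inner_left V v.snd u.fst
    have e4 : ⟪A1 u.snd, v.snd⟫_ℂ = ⟪u.snd, A1 v.snd⟫_ℂ := hA1.isSymmetric u.snd v.snd
    simp only [inner_add_left, inner_add_right, e1, e2, e3, e4]
    ring
  -- invariance of the graphs
  have hgrX_inv : ∀ u ∈ gr X, B u ∈ gr X := by
    intro u hu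
    rw [mem_gr] at hu ⊢
    rw [hB1, hB2, hu, hXp u.fst, map_add]
    abel
  have hgrY_inv : ∀ u ∈ gr Y, B u ∈ gr Y := by
    intro u hu
    rw [mem_gr] at hu ⊢
    rw [hB1, hB2, hu, hYp u.fst, map_add]
    abel
  -- range of Q is the graph of X
  have hranQ : LinearMap.range (Q : WithLp 2 (H0 × H1) →ₗ[ℂ] WithLp 2 (H0 × H1)) = gr X := by
    rw [hQran]
    ext u
    constructor
    · rintro ⟨p, hp, rfl⟩
      have hp' : p.2 = X p.1 := by simpa [LinearMap.mem_graph_iff] using hp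
      exact mem_gr.mpr hp'
    · intro hu
      refine ⟨(u.fst, u.snd), ?_, rfl⟩
      simpa [LinearMap.mem_graph_iff] using mem_gr.mp hu
  have hQfix : ∀ u ∈ gr X, Q u = u := by
    intro u hu
    rw [← hranQ] at hu
    obtain ⟨v, rfl⟩ := hu
    calc Q (Q v) = (Q * Q) v := rfl
    _ = Q v := by rw [hQ]
  -- the projection onto the graph of Y commutes with Q
  have hQP : Q * pr Y = pr Y * Q :=
    hQcomm (pr Y) (pr_idem Y) (pr_sa Y)
      (by rw [pr_range]; exact hgrY_inv)
  -- decomposition of elements of gr X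
  have hsplit : ∀ u ∈ gr X, pr Y u ∈ gr X ∧ (u - pr Y u) ∈ gr X ∧
      (∀ v ∈ gr Y, ⟪u - pr Y u, v⟫_ℂ = 0) := by
    intro u hu
    have hPuY : pr Y u ∈ gr Y := pr_mem Y u
    have hPuX : pr Y u ∈ gr X := by
      have : Q (pr Y u) = pr Y u := by
        calc Q (pr Y u) = (Q * pr Y) u := rfl
        _ = (pr Y * Q) u := by rw [hQP]
        _ = pr Y (Q u) := rfl
        _ = pr Y u := by rw [hQfix u hu]
      rw [← hranQ]
      exact ⟨pr Y u, this⟩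
    refine ⟨hPuX, Submodule.sub_mem _ hu hPuX, ?_⟩
    intro v hv
    have hPv : pr Y v = v := pr_eq_self hv
    have hPn : pr Y (u - pr Y u) = 0 := by
      rw [map_sub, pr_eq_self (pr_mem Y u), sub_self]
    calc ⟪u - pr Y u, v⟫_ℂ = ⟪u - pr Y u, pr Y v⟫_ℂ := by rw [hPv]
    _ = ⟪pr Y (u - pr Y u), v⟫_ℂ := ((pr_sa Y).isSymmetric _ _).symm
    _ = 0 := by rw [hPn, inner_zero_left]
  -- the set K
  set K : H0 → Prop := fun x => ∀ v ∈ gr Y, ⟪mk2 x (X x), v⟫_ℂ = 0 with hKdef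
  -- basic pairing consequence
  have hKpair : ∀ x, K x → ∀ h : H0, ⟪x, h⟫_ℂ + ⟪X x, Y h⟫_ℂ = 0 := by
    intro x hx h
    have := hx (mk2 h (Y h)) (mem_gr.mpr rfl)
    rwa [inner_mk2] at this
  -- isometry on K
  have hKiso : ∀ x, K x → ContinuousLinearMap.adjoint X (X x) = x := by
    intro x hx
    have hYs : x + ContinuousLinearMap.adjoint Y (X x) = 0 := by
      have hall : ∀ h : H0, ⟪x + ContinuousLinearMap.adjoint Y (X x), h⟫_ℂ = 0 := by
        intro h
        rw [inner_add_left, ContinuousLinearMap.adjoint_inner_left]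
        exact hKpair x hx h
      have := hall (x + ContinuousLinearMap.adjoint Y (X x))
      exact inner_self_eq_zero.mp this
    have hxeq : x = -(ContinuousLinearMap.adjoint Y (X x)) :=
      eq_neg_of_add_eq_zero_left hYs
    have hnx1 : ‖x‖ ≤ ‖X x‖ := by
      have h0 : ‖x‖ = ‖ContinuousLinearMap.adjoint Y (X x)‖ := by
        conv_lhs => rw [hxeq]
        exact norm_neg _
      rw [h0]
      calc ‖ContinuousLinearMap.adjoint Y (X x)‖
          ≤ ‖ContinuousLinearMap.adjoint Y‖ * ‖X x‖ := le_opNorm _ _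
      _ ≤ 1 * ‖X x‖ := by
          apply mul_le_mul_of_nonneg_right _ (norm_nonneg _)
          rw [LinearIsometryEquiv.norm_map]
          exact hYnorm
      _ = ‖X x‖ := one_mul _
    have hnx2 : ‖X x‖ ≤ ‖x‖ := by
      calc ‖X x‖ ≤ ‖X‖ * ‖x‖ := le_opNorm _ _
      _ ≤ 1 * ‖x‖ := mul_le_mul_of_nonneg_right hXnorm (norm_nonneg _)
      _ = ‖x‖ := one_mul _
    have hnx : ‖X x‖ = ‖x‖ := le_antisymm hnx2 hnx1
    have hXsX : ‖ContinuousLinearMap.adjoint X (X x)‖ ≤ ‖x‖ := by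
      calc ‖ContinuousLinearMap.adjoint X (X x)‖
          ≤ ‖ContinuousLinearMap.adjoint X‖ * ‖X x‖ := le_opNorm _ _
      _ ≤ 1 * ‖X x‖ := by
          apply mul_le_mul_of_nonneg_right _ (norm_nonneg _)
          rw [LinearIsometryEquiv.norm_map]
          exact hXnorm
      _ = ‖x‖ := by rw [one_mul, hnx]
    have hre : RCLike.re ⟪ContinuousLinearMap.adjoint X (X x), x⟫_ℂ = ‖x‖ ^ 2 := by
      rw [ContinuousLinearMap.adjoint_inner_left]
      rw [inner_self_eq_norm_sq (𝕜 := ℂ)]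
      rw [hnx]
    have hsq : ‖ContinuousLinearMap.adjoint X (X x) - x‖ ^ 2 ≤ 0 := by
      rw [norm_sub_sq (𝕜 := ℂ), hre]
      nlinarith [norm_nonneg (ContinuousLinearMap.adjoint X (X x)), norm_nonneg x, hXsX]
    have : ‖ContinuousLinearMap.adjoint X (X x) - x‖ = 0 := by
      nlinarith [norm_nonneg (ContinuousLinearMap.adjoint X (X x) - x)]
    rw [norm_eq_zero, sub_eq_zero] at this
    exact this
  -- B preserves "graph point over K"
  have hBuX : ∀ x : H0, B (mk2 x (X x)) = mk2 (A0 x + V (X x)) (X (A0 x + V (X x))) := by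
    intro x
    have h1 : B (mk2 x (X x)) ∈ gr X := hgrX_inv _ (mem_gr.mpr rfl)
    rw [mem_gr] at h1
    have h2 : (B (mk2 x (X x))).fst = A0 x + V (X x) := by rw [hB1]; simp
    calc B (mk2 x (X x)) = mk2 (B (mk2 x (X x))).fst (B (mk2 x (X x))).snd := rfl
    _ = mk2 (A0 x + V (X x)) (X (A0 x + V (X x))) := by rw [h1, h2]
  have hBperp : ∀ x, K x → ∀ v ∈ gr Y, ⟪B (mk2 x (X x)), v⟫_ℂ = 0 := by
    intro x hx v hv
    rw [hBsa]
    exact hx (B v) (hgrY_inv v hv)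
  have hKinv : ∀ x, K x → K (A0 x + V (X x)) := by
    intro x hx v hv
    have := hBperp x hx v hv
    rwa [hBuX] at this
  -- K is orthogonal to the "agreement" subspace
  have hperpK0 : ∀ x, K x → ∀ h : H0, X h = Y h → ⟪x, h⟫_ℂ = 0 := by
    intro x hx h hh
    have h1 := hKpair x hx h
    rw [← hh] at h1
    have h2 : ⟪X x, X h⟫_ℂ = ⟪x, h⟫_ℂ := by
      rw [← ContinuousLinearMap.adjoint_inner_left, hKiso x hx]
    rw [h2] at h1
    have : (2 : ℂ) * ⟪x, h⟫_ℂ = 0 := by rw [two_mul]; exact h1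
    simpa using this
  -- decomposition of H0
  have hdecomp : ∀ c : H0, ∃ h k : H0, X h = Y h ∧ K k ∧ c = h + k := by
    intro c
    have hu : mk2 c (X c) ∈ gr X := mem_gr.mpr rfl
    obtain ⟨hPuX, hnX, hnperp⟩ := hsplit _ hu
    set u := mk2 c (X c)
    set w := pr Y u
    have hwY : w ∈ gr Y := pr_mem Y u
    refine ⟨w.fst, (u - w).fst, ?_, ?_, ?_⟩
    · rw [← mem_gr.mp hPuX, mem_gr.mp hwY]
    · intro v hv
      have h1 : mk2 (u - w).fst (X (u - w).fst) = u - w := by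
        rw [← mem_gr.mp hnX]
        rfl
      rw [h1]
      exact hnperp v hv
    · rw [WithLp.sub_fst]
      show c = w.fst + (c - w.fst)
      abel
  -- orthogonal to agreement subspace implies in K
  have hperpimpK : ∀ c : H0, (∀ h : H0, X h = Y h → ⟪c, h⟫_ℂ = 0) → K c := by
    intro c hc
    obtain ⟨h, k, hh, hk, rfl⟩ := hdecomp c
    have h0 : ⟪h, h⟫_ℂ = 0 := by
      have e1 := hc h hh
      have e2 := hperpK0 k hk h hh
      rw [inner_add_left, e2, add_zero] at e1
      exact e1
    have : h = 0 := inner_self_eq_zero.mp h0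
    rw [this, zero_add]
    exact hk
  -- key pointwise identity for x in the isometric part
  have hVXid : ∀ x : H0, ContinuousLinearMap.adjoint X (X x) = x →
      V (X x) = A0 x
        + ContinuousLinearMap.adjoint X (ContinuousLinearMap.adjoint V x)
        - ContinuousLinearMap.adjoint X (A1 (X x)) := by
    intro x hxx
    have := hXadjp (X x)
    rwa [hxx] at this
  -- every element of K is zero
  have hK0 : ∀ x, K x → x = 0 := by
    intro x hx
    have hxx := hKiso x hx
    have hVXx := hVXid x hxx
    -- a ∈ K
    have haK : K (A0 x + V (X x)) := hKinv x hx
    -- c ⊥ K₀, hence c ∈ K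
    have hsum2 : A0 x + V (X x)
        + (ContinuousLinearMap.adjoint X (ContinuousLinearMap.adjoint V x)
          + ContinuousLinearMap.adjoint X (A1 (X x)))
        = (A0 x + ContinuousLinearMap.adjoint X (ContinuousLinearMap.adjoint V x))
          + (A0 x + ContinuousLinearMap.adjoint X (ContinuousLinearMap.adjoint V x)) := by
      rw [hVXx]; abel
    have hcK : K (A0 x + ContinuousLinearMap.adjoint X (ContinuousLinearMap.adjoint V x)) := by
      apply hperpimpK
      intro h hh
      have h1 := hBperp x hx (mk2 h (Y h)) (mem_gr.mpr rfl)
      rw [WithLp.prod_inner_apply, WithLp.ofLp_fst, WithLp.ofLp_snd, WithLp.ofLp_fst, WithLp.ofLp_snd, hB1, hB2] at h1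
      simp only [mk2_fst, mk2_snd] at h1
      rw [← hh] at h1
      have h2 : ⟪ContinuousLinearMap.adjoint X (ContinuousLinearMap.adjoint V x)
            + ContinuousLinearMap.adjoint X (A1 (X x)), h⟫_ℂ
          = ⟪ContinuousLinearMap.adjoint V x + A1 (X x), X h⟫_ℂ := by
        rw [inner_add_left, inner_add_left,
          ContinuousLinearMap.adjoint_inner_left X h (ContinuousLinearMap.adjoint V x),
          ContinuousLinearMap.adjoint_inner_left X h (A1 (X x))]
      rw [← h2, ← inner_add_left] at h1
      have hvec : A0 x + V (X x)
          + (ContinuousLinearMap.adjoint X (ContinuousLinearMap.adjoint V x)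
            + ContinuousLinearMap.adjoint X (A1 (X x)))
          = (A0 x + ContinuousLinearMap.adjoint X (ContinuousLinearMap.adjoint V x))
            + (A0 x + ContinuousLinearMap.adjoint X (ContinuousLinearMap.adjoint V x)) := by
        rw [hVXx]; abel
      rw [hvec, inner_add_left] at h1
      have h3 : (2 : ℂ) * ⟪A0 x + ContinuousLinearMap.adjoint X
          (ContinuousLinearMap.adjoint V x), h⟫_ℂ = 0 := by
        rw [two_mul]; exact h1
      simpa using h3
    -- K is closed under subtraction
    have hKsub : ∀ p q : H0, K p → K q → K (p - q) := by
      intro p q hp hq v hv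
      have : mk2 (p - q) (X (p - q)) = mk2 p (X p) - mk2 q (X q) := by
        rw [mk2_sub, map_sub]
      rw [this, inner_sub_left, hp v hv, hq v hv, sub_zero]
    have hwK : K (V (X x) - ContinuousLinearMap.adjoint X (ContinuousLinearMap.adjoint V x)) := by
      have := hKsub _ _ haK hcK
      have he : A0 x + V (X x)
          - (A0 x + ContinuousLinearMap.adjoint X (ContinuousLinearMap.adjoint V x))
          = V (X x) - ContinuousLinearMap.adjoint X (ContinuousLinearMap.adjoint V x) := by
        abel
      rwa [he] at this
    -- w ⊥ K
    have hwperp : ∀ x' : H0, K x' →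
        ⟪V (X x) - ContinuousLinearMap.adjoint X (ContinuousLinearMap.adjoint V x), x'⟫_ℂ
          = 0 := by
      intro x' hx'
      have hxx' := hKiso x' hx'
      have hVXx' := hVXid x' hxx'
      have hsum2' : A0 x' + V (X x')
          + (ContinuousLinearMap.adjoint X (ContinuousLinearMap.adjoint V x')
            + ContinuousLinearMap.adjoint X (A1 (X x')))
          = (A0 x' + ContinuousLinearMap.adjoint X (ContinuousLinearMap.adjoint V x'))
            + (A0 x' + ContinuousLinearMap.adjoint X (ContinuousLinearMap.adjoint V x')) := by
        rw [hVXx']; abel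
      have hmain := hBsa (mk2 x (X x)) (mk2 x' (X x'))
      rw [WithLp.prod_inner_apply, WithLp.prod_inner_apply] at hmain
      simp only [WithLp.ofLp_fst, WithLp.ofLp_snd] at hmain
      rw [hB1, hB2, hB1, hB2] at hmain
      simp only [mk2_fst, mk2_snd] at hmain
      rw [← ContinuousLinearMap.adjoint_inner_left X x'
          (ContinuousLinearMap.adjoint V x + A1 (X x))] at hmain
      rw [← ContinuousLinearMap.adjoint_inner_right X x
          (ContinuousLinearMap.adjoint V x' + A1 (X x'))] at hmain
      rw [← inner_add_left, ← inner_add_right] at hmain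
      have hv1 : A0 x + V (X x)
          + ContinuousLinearMap.adjoint X (ContinuousLinearMap.adjoint V x + A1 (X x))
          = (A0 x + ContinuousLinearMap.adjoint X (ContinuousLinearMap.adjoint V x))
            + (A0 x + ContinuousLinearMap.adjoint X (ContinuousLinearMap.adjoint V x)) := by
        rw [map_add, hVXx]; abel
      have hv2 : A0 x' + V (X x')
          + ContinuousLinearMap.adjoint X (ContinuousLinearMap.adjoint V x' + A1 (X x'))
          = (A0 x' + ContinuousLinearMap.adjoint X (ContinuousLinearMap.adjoint V x'))
            + (A0 x' + ContinuousLinearMap.adjoint X (ContinuousLinearMap.adjoint V x')) := by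
        rw [map_add, hVXx']; abel
      rw [hv1, hv2, inner_add_left, inner_add_right, ← two_mul, ← two_mul] at hmain
      have h2 := mul_left_cancel₀ (two_ne_zero (α := ℂ)) hmain
      have hA0sym : ∀ a b : H0, ⟪A0 a, b⟫_ℂ = ⟪a, A0 b⟫_ℂ := fun a b => hA0.isSymmetric a b
      rw [inner_add_left, inner_add_right, hA0sym x x'] at h2
      have h3 := add_left_cancel h2
      have h4 : ⟪x, ContinuousLinearMap.adjoint X (ContinuousLinearMap.adjoint V x')⟫_ℂ
          = ⟪V (X x), x'⟫_ℂ := by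
        rw [ContinuousLinearMap.adjoint_inner_right X x,
          ContinuousLinearMap.adjoint_inner_right V (X x) x']
      rw [h4] at h3
      rw [inner_sub_left, ← h3, sub_self]
    -- conclude w = 0
    have hw0 : V (X x) - ContinuousLinearMap.adjoint X (ContinuousLinearMap.adjoint V x) = 0 := by
      have := hwperp _ hwK
      exact inner_self_eq_zero.mp this
    -- x is in both kernels
    have hmem : x ∈ LinearMap.ker ((ContinuousLinearMap.id ℂ H0
        - (ContinuousLinearMap.adjoint X).comp X : H0 →L[ℂ] H0) : H0 →ₗ[ℂ] H0) ⊓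
        LinearMap.ker ((V.comp X -
          (ContinuousLinearMap.adjoint X).comp (ContinuousLinearMap.adjoint V) : H0 →L[ℂ] H0) :
            H0 →ₗ[ℂ] H0) := by
      rw [Submodule.mem_inf]
      constructor
      · apply LinearMap.mem_ker.mpr
        show ContinuousLinearMap.id ℂ H0 x - (ContinuousLinearMap.adjoint X).comp X x = 0
        rw [ContinuousLinearMap.comp_apply, hxx]
        simp
      · apply LinearMap.mem_ker.mpr
        show V.comp X x - (ContinuousLinearMap.adjoint X).comp
          (ContinuousLinearMap.adjoint V) x = 0
        exact hw0
    rw [hker] at hmem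
    simpa using hmem
  -- conclusion
  ext x
  have hu : mk2 x (X x) ∈ gr X := mem_gr.mpr rfl
  obtain ⟨hPuX, hnX, hnperp⟩ := hsplit _ hu
  set u := mk2 x (X x)
  have hkK : K (u - pr Y u).fst := by
    intro v hv
    have h1 : mk2 (u - pr Y u).fst (X (u - pr Y u).fst) = u - pr Y u := by
      rw [← mem_gr.mp hnX]
      rfl
    rw [h1]
    exact hnperp v hv
  have hk0 : (u - pr Y u).fst = 0 := hK0 _ hkK
  have hn0 : u - pr Y u = 0 := by
    have h2 : (u - pr Y u).snd = 0 := by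
      rw [mem_gr.mp hnX, hk0, map_zero]
    calc u - pr Y u = mk2 (u - pr Y u).fst (u - pr Y u).snd := rfl
    _ = mk2 0 0 := by rw [hk0, h2]
    _ = 0 := rfl
  have huY : u ∈ gr Y := by
    have : u = pr Y u := by
      have := sub_eq_zero.mp hn0
      exact this
    rw [this]
    exact pr_mem Y u
  have := mem_gr.mp huY
  exact this.symm

end
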